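/- arXiv:math/0605215 — 3 statements merged into one kernel-verified Lean document; each statement's English description precedes it below -/
import Mathlib

section
/- Define on the vector space S of stable locally-L² sections (functions f : (0,∞) → H, Borel, locally L², with f(λ+1) = U f(λ) a.e. for λ large, where U is a fixed isometry on H) the sesquilinear form ⟨f,g⟩ = lim_{n→∞} ∫_n^{n+1} ⟨f(λ), g(λ)⟩ dλ. Then this form is well-defined (the limit exists) and positive semidefinite: ⟨f,f⟩ ≥ 0 for all f ∈ S. -/
open MeasureTheory Set Filter

/-- A stable section: Borel measurable, locally square-integrable, and eventually
satisfying `f(λ+1) = U f(λ)` almost everywhere. -/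
def Stable {H : Type*} [NormedAddCommGroup H] [InnerProductSpace ℂ H]
    [MeasurableSpace H] [BorelSpace H] (U : H →ₗᵢ[ℂ] H) (f : ℝ → H) : Prop :=
  Measurable f ∧
  (∀ T : ℝ, 0 < T → IntegrableOn (fun lam => ‖f lam‖ ^ 2) (Ioc 0 T)) ∧
  ∃ l0 : ℝ, 0 < l0 ∧ ∀ᵐ lam : ℝ, l0 ≤ lam → f (lam + 1) = U (f lam)

lemma stable_eventually_const {H : Type*} [NormedAddCommGroup H] [InnerProductSpace ℂ H]
    [MeasurableSpace H] [BorelSpace H] (U : H →ₗᵢ[ℂ] H) (f g : ℝ → H)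
    (hf : Stable U f) (hg : Stable U g) :
    ∃ N : ℕ, ∀ n : ℕ, N ≤ n →
      (∫ lam in Ioc (n : ℝ) (n + 1), (inner ℂ (f lam) (g lam) : ℂ))
        = ∫ lam in Ioc (N : ℝ) (N + 1), (inner ℂ (f lam) (g lam) : ℂ) := by
  obtain ⟨lf, _, haf⟩ := hf.2.2
  obtain ⟨lg, _, hag⟩ := hg.2.2
  set l0 := max lf lg with hl0
  refine ⟨⌈l0⌉₊, ?_⟩
  have step : ∀ n : ℕ, ⌈l0⌉₊ ≤ n →
      (∫ lam in Ioc ((n : ℝ) + 1) ((n : ℝ) + 1 + 1), (inner ℂ (f lam) (g lam) : ℂ))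
        = ∫ lam in Ioc (n : ℝ) ((n : ℝ) + 1), (inner ℂ (f lam) (g lam) : ℂ) := by
    intro n hn
    have h1 : (∫ lam in Ioc ((n : ℝ) + 1) ((n : ℝ) + 1 + 1), (inner ℂ (f lam) (g lam) : ℂ))
        = ∫ lam in Ioc (n : ℝ) ((n : ℝ) + 1), (inner ℂ (f (lam + 1)) (g (lam + 1)) : ℂ) := by
      rw [← intervalIntegral.integral_of_le (by linarith),
        ← intervalIntegral.integral_of_le (by linarith : (n : ℝ) ≤ (n : ℝ) + 1),
        ← intervalIntegral.integral_comp_add_right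
          (fun lam => (inner ℂ (f lam) (g lam) : ℂ)) 1]
    rw [h1]
    apply setIntegral_congr_ae measurableSet_Ioc
    filter_upwards [haf, hag] with x hxf hxg hx
    have hln : l0 ≤ (n : ℝ) := (Nat.le_ceil l0).trans (by exact_mod_cast hn)
    have hxl : l0 ≤ x := hln.trans hx.1.le
    rw [hxf (le_trans (le_max_left _ _) hxl), hxg (le_trans (le_max_right _ _) hxl),
      LinearIsometry.inner_map_map]
  intro n hn
  induction n, hn using Nat.le_induction with
  | base => rfl
  | succ m hm ih =>
    have := step m hm
    push_cast
    push_cast at this ih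
    rw [show (m : ℝ) + 1 + 1 = (m : ℝ) + 1 + 1 from rfl] at this
    rw [this, ih]

/-- On the space of stable sections, the sesquilinear form
`⟨f,g⟩ = lim_{n→∞} ∫_n^{n+1} ⟪f(λ), g(λ)⟫ dλ` is well defined (the limit exists),
and it is positive semidefinite: `⟨f,f⟩` is a nonnegative real number. -/
theorem stmt4 {H : Type*} [NormedAddCommGroup H] [InnerProductSpace ℂ H]
    [MeasurableSpace H] [BorelSpace H] (U : H →ₗᵢ[ℂ] H) :
    (∀ f g : ℝ → H, Stable U f → Stable U g →
      ∃ c : ℂ, Tendsto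
        (fun n : ℕ => ∫ lam in Ioc (n : ℝ) (n + 1), (inner ℂ (f lam) (g lam) : ℂ))
        atTop (nhds c)) ∧
    (∀ f : ℝ → H, Stable U f →
      ∃ r : ℝ, 0 ≤ r ∧ Tendsto
        (fun n : ℕ => ∫ lam in Ioc (n : ℝ) (n + 1), (inner ℂ (f lam) (f lam) : ℂ))
        atTop (nhds (r : ℂ))) := by
  constructor
  · intro f g hf hg
    obtain ⟨N, hN⟩ := stable_eventually_const U f g hf hg
    exact ⟨_, Tendsto.congr' (eventually_atTop.2 ⟨N, fun n hn => (hN n hn).symm⟩)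
      tendsto_const_nhds⟩
  · intro f hf
    obtain ⟨N, hN⟩ := stable_eventually_const U f f hf hf
    refine ⟨∫ lam in Ioc (N : ℝ) (N + 1), ‖f lam‖ ^ 2,
      setIntegral_nonneg measurableSet_Ioc (fun x _ => by positivity), ?_⟩
    have key1 : (∫ lam in Ioc (N : ℝ) (N + 1), (inner ℂ (f lam) (f lam) : ℂ))
        = ∫ lam in Ioc (N : ℝ) (N + 1), ((‖f lam‖ ^ 2 : ℝ) : ℂ) := by
      apply setIntegral_congr_ae measurableSet_Ioc
      filter_upwards with x _
      rw [inner_self_eq_norm_sq_to_K]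
      exact (Complex.ofReal_pow _ _).symm
    have key : ((∫ lam in Ioc (N : ℝ) (N + 1), ‖f lam‖ ^ 2 : ℝ) : ℂ)
        = ∫ lam in Ioc (N : ℝ) (N + 1), (inner ℂ (f lam) (f lam) : ℂ) := by
      exact (key1.trans (integral_ofReal (𝕜 := ℂ))).symm
    rw [key]
    exact Tendsto.congr' (eventually_atTop.2 ⟨N, fun n hn => (hN n hn).symm⟩)
      tendsto_const_nhds
end

section
/- The translation-and-multiplication operator φ₀ (defined by (φ₀ f)(λ) = W f(λ−t) for λ > t, 0 for λ ≤ t, with W an isometry commuting with U) induces a well-defined isometric linear operator on the quotient pre-Hilbert space S/N of stable sections modulo eventually-null sections. -/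
set_option maxHeartbeats 1000000

open MeasureTheory Set Filter

/-- Eventually null. -/
def EvNull {H : Type*} [NormedAddCommGroup H] (f : ℝ → H) : Prop :=
  ∃ l0 : ℝ, 0 < l0 ∧ ∀ᵐ lam : ℝ, l0 ≤ lam → f lam = 0

/-- The translation-and-multiplication operator `φ₀`. -/
noncomputable def phi0 {H : Type*} [NormedAddCommGroup H] [InnerProductSpace ℂ H]
    (W : H →L[ℂ] H) (t : ℝ) (f : ℝ → H) : ℝ → H :=
  fun lam => if t < lam then W (f (lam - t)) else 0

section Aux

variable {g : ℝ → ℝ}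

/-- Interval integrability from local integrability on `(0, T]`. -/
lemma aux_ii (hint : ∀ T : ℝ, 0 < T → IntegrableOn g (Ioc 0 T)) {a b : ℝ}
    (ha : 0 < a) (hb : 0 < b) : IntervalIntegrable g MeasureTheory.volume a b := by
  rw [intervalIntegrable_iff]
  exact (hint (max a b) (lt_of_lt_of_le ha (le_max_left a b))).mono_set
    (fun x hx => ⟨lt_of_le_of_lt (le_min ha.le hb.le) hx.1, hx.2⟩)

/-- Adjacent shift: the moving-window integral of an eventually 1-periodic function
is locally constant. -/
lemma aux_step (l0 : ℝ) (hl0 : 0 < l0)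
    (hint : ∀ T : ℝ, 0 < T → IntegrableOn g (Ioc 0 T))
    (hper : ∀ᵐ lam : ℝ, l0 ≤ lam → g (lam + 1) = g lam)
    {s s' : ℝ} (hs : l0 ≤ s) (h1 : s ≤ s') (h2 : s' ≤ s + 1) :
    (∫ x in s..(s + 1), g x) = ∫ x in s'..(s' + 1), g x := by
  have hps : 0 < s := lt_of_lt_of_le hl0 hs
  have hps' : 0 < s' := lt_of_lt_of_le hps h1
  have hA : IntervalIntegrable g MeasureTheory.volume s s' := aux_ii hint hps hps'
  have hB : IntervalIntegrable g MeasureTheory.volume s' (s + 1) :=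
    aux_ii hint hps' (by linarith)
  have hC : IntervalIntegrable g MeasureTheory.volume (s + 1) (s' + 1) :=
    aux_ii hint (by linarith) (by linarith)
  have h3 : (∫ x in (s + 1)..(s' + 1), g x) = ∫ x in s..s', g x := by
    rw [← intervalIntegral.integral_comp_add_right (a := s) (b := s') g 1]
    apply intervalIntegral.integral_congr_ae
    filter_upwards [hper] with x hx hxm
    rw [uIoc_of_le h1] at hxm
    exact hx (le_trans hs hxm.1.le)
  have e1 := intervalIntegral.integral_add_adjacent_intervals hA hB
  have e2 := intervalIntegral.integral_add_adjacent_intervals hB hC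
  rw [← e1, ← e2, h3]; ring

/-- The moving-window integral is constant on `[l0, ∞)`. -/
lemma aux_const (l0 : ℝ) (hl0 : 0 < l0)
    (hint : ∀ T : ℝ, 0 < T → IntegrableOn g (Ioc 0 T))
    (hper : ∀ᵐ lam : ℝ, l0 ≤ lam → g (lam + 1) = g lam)
    {s : ℝ} (hs : l0 ≤ s) :
    (∫ x in s..(s + 1), g x) = ∫ x in l0..(l0 + 1), g x := by
  obtain ⟨n, hn⟩ : ∃ n : ℕ, s ≤ l0 + n := ⟨⌈s - l0⌉₊, by
    have := Nat.le_ceil (s - l0); linarith⟩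
  induction n generalizing s with
  | zero => simp at hn; rw [le_antisymm hn hs]
  | succ n ih =>
    rcases le_or_gt s (l0 + n) with h | h
    · exact ih hs h
    · have h0 : (∫ x in (l0 + n)..(l0 + n + 1), g x) = ∫ x in l0..(l0 + 1), g x :=
        ih (le_add_of_nonneg_right n.cast_nonneg) le_rfl
      rw [← h0]
      exact (aux_step l0 hl0 hint hper (le_add_of_nonneg_right n.cast_nonneg) h.le
        (by push_cast at hn ⊢; linarith)).symm

end Aux

/-- With `W` an isometry commuting with `U`, the operator `φ₀` induces a
well-defined isometric linear operator on the quotient pre-Hilbert space `S/N`: it maps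
stable sections to stable sections, eventually-null sections to eventually-null
sections, is linear, and preserves the limit form `⟨f,f⟩`. -/
theorem stmt13 {H : Type*} [NormedAddCommGroup H] [InnerProductSpace ℂ H]
    [MeasurableSpace H] [BorelSpace H] (U : H →ₗᵢ[ℂ] H)
    (W : H →L[ℂ] H) (hW : ∀ x : H, ‖W x‖ = ‖x‖)
    (hcomm : ∀ x : H, W (U x) = U (W x)) (t : ℝ) (ht : 0 < t) :
    (∀ f : ℝ → H, Stable U f → Stable U (phi0 W t f)) ∧
    (∀ f : ℝ → H, Stable U f → EvNull f → EvNull (phi0 W t f)) ∧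
    (∀ f g : ℝ → H, phi0 W t (f + g) = phi0 W t f + phi0 W t g) ∧
    (∀ (a : ℂ) (f : ℝ → H), phi0 W t (a • f) = a • phi0 W t f) ∧
    (∀ (f : ℝ → H), Stable U f → ∀ r : ℂ,
      Tendsto (fun n : ℕ => ∫ lam in Ioc (n : ℝ) (n + 1),
        (inner ℂ (f lam) (f lam) : ℂ)) atTop (nhds r) →
      Tendsto (fun n : ℕ => ∫ lam in Ioc (n : ℝ) (n + 1),
        (inner ℂ (phi0 W t f lam) (phi0 W t f lam) : ℂ)) atTop (nhds r)) := by
  have hnorm : ∀ (f : ℝ → H) (lam : ℝ),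
      ‖phi0 W t f lam‖ ^ 2 = (Ioi t).indicator (fun x => ‖f (x - t)‖ ^ 2) lam := by
    intro f lam
    by_cases h : t < lam
    · simp [phi0, h, indicator_of_mem (mem_Ioi.mpr h), hW]
    · simp [phi0, h, indicator_of_notMem (by simpa using h : lam ∉ Ioi t)]
  refine ⟨?_, ?_, ?_, ?_, ?_⟩
  · -- stability preserved
    rintro f ⟨hmeas, hint, l0, hl0, hst⟩
    refine ⟨?_, ?_, l0 + t, by positivity, ?_⟩
    · exact Measurable.ite measurableSet_Ioi
        (W.continuous.measurable.comp (hmeas.comp (measurable_id.sub_const t)))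
        measurable_const
    · intro T hT
      have : IntegrableOn (fun x => ‖f (x - t)‖ ^ 2) (Ioc t (max T 1 + t)) := by
        have := (measurePreserving_sub_right MeasureTheory.volume t).integrableOn_comp_preimage
          (f := fun x => ‖f x‖ ^ 2) (MeasurableEquiv.subRight t).measurableEmbedding
          (s := Ioc 0 (max T 1))
        rw [preimage_sub_const_Ioc] at this
        simpa [Function.comp_def] using this.mpr (hint (max T 1) (by positivity))
      have hmi : IntegrableOn ((Ioi t).indicator fun x => ‖f (x - t)‖ ^ 2) (Ioc 0 T) := by
        rw [IntegrableOn, integrable_indicator_iff measurableSet_Ioi, IntegrableOn,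
          Measure.restrict_restrict measurableSet_Ioi]
        exact this.mono_set (fun x hx =>
          ⟨hx.1, le_trans hx.2.2 (le_trans (le_max_left T 1) (by linarith))⟩)
      exact hmi.congr_fun (fun x _ => (hnorm f x).symm) measurableSet_Ioc
    · have htr := (measurePreserving_sub_right MeasureTheory.volume t).quasiMeasurePreserving.ae hst
      filter_upwards [htr] with lam hlam hge
      have h1 : l0 ≤ lam - t := by linarith
      have h2 : t < lam := by linarith
      have h3 : t < lam + 1 := by linarith
      simp only [phi0, if_pos h2, if_pos h3]
      have : lam + 1 - t = lam - t + 1 := by ring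
      rw [this, hlam h1, hcomm]
  · -- eventually null preserved
    rintro f _ ⟨l0, hl0, hnull⟩
    refine ⟨l0 + t, by positivity, ?_⟩
    have htr := (measurePreserving_sub_right MeasureTheory.volume t).quasiMeasurePreserving.ae hnull
    filter_upwards [htr] with lam hlam hge
    by_cases h : t < lam
    · simp [phi0, if_pos h, hlam (by linarith : l0 ≤ lam - t)]
    · simp [phi0, if_neg h]
  · intro f g; funext lam
    by_cases h : t < lam <;> simp [phi0, h]
  · intro a f; funext lam
    by_cases h : t < lam <;> simp [phi0, h]
  · -- isometry of the limit form
    rintro f ⟨hmeas, hint, l0, hl0, hst⟩ r hr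
    set g : ℝ → ℝ := fun lam => ‖f lam‖ ^ 2 with hg
    have hper : ∀ᵐ lam : ℝ, l0 ≤ lam → g (lam + 1) = g lam := by
      filter_upwards [hst] with lam h1 h2
      simp [hg, h1 h2]
    set c : ℝ := ∫ x in l0..(l0 + 1), g x with hc
    -- the hypothesis sequence is eventually constant = c
    have key : ∀ s : ℝ, l0 ≤ s → (∫ lam in Ioc s (s + 1), g lam) = c := by
      intro s hs
      rw [← intervalIntegral.integral_of_le (by linarith : s ≤ s + 1)]
      exact aux_const l0 hl0 hint hper hs
    have hfc : (fun n : ℕ => ∫ lam in Ioc (n : ℝ) (n + 1), (inner ℂ (f lam) (f lam) : ℂ))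
        =ᶠ[atTop] (fun _ => (c : ℂ)) := by
      filter_upwards [eventually_ge_atTop ⌈l0⌉₊] with n hn
      have hn' : l0 ≤ (n : ℝ) := le_trans (Nat.le_ceil l0) (by exact_mod_cast hn)
      calc (∫ lam in Ioc (n : ℝ) (n + 1), (inner ℂ (f lam) (f lam) : ℂ))
          = ∫ lam in Ioc (n : ℝ) (n + 1), ((g lam : ℝ) : ℂ) := by
            refine setIntegral_congr_fun measurableSet_Ioc (fun lam _ => ?_)
            rw [inner_self_eq_norm_sq_to_K]; simp only [hg]; norm_num
        _ = ((∫ lam in Ioc (n : ℝ) (n + 1), g lam : ℝ) : ℂ) := integral_ofReal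
        _ = (c : ℂ) := by rw [key _ hn']
    have hrc : r = (c : ℂ) :=
      tendsto_nhds_unique hr (Tendsto.congr' hfc.symm tendsto_const_nhds)
    have hgc : (fun n : ℕ => ∫ lam in Ioc (n : ℝ) (n + 1),
        (inner ℂ (phi0 W t f lam) (phi0 W t f lam) : ℂ)) =ᶠ[atTop] (fun _ => (c : ℂ)) := by
      filter_upwards [eventually_ge_atTop ⌈l0 + t⌉₊] with n hn
      have hn' : l0 + t ≤ (n : ℝ) := le_trans (Nat.le_ceil (l0 + t)) (by exact_mod_cast hn)
      have e2 : (∫ lam in Ioc (n : ℝ) (n + 1), g (lam - t))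
          = ∫ x in Ioc ((n : ℝ) - t) ((n : ℝ) - t + 1), g x := by
        rw [← intervalIntegral.integral_of_le (by linarith : (n : ℝ) ≤ n + 1),
          ← intervalIntegral.integral_of_le (by linarith : (n : ℝ) - t ≤ (n : ℝ) - t + 1),
          intervalIntegral.integral_comp_sub_right g t]
        congr 1; ring
      calc (∫ lam in Ioc (n : ℝ) (n + 1), (inner ℂ (phi0 W t f lam) (phi0 W t f lam) : ℂ))
          = ∫ lam in Ioc (n : ℝ) (n + 1), ((g (lam - t) : ℝ) : ℂ) := by
            refine setIntegral_congr_fun measurableSet_Ioc (fun lam hlam => ?_)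
            have h2 : t < lam := lt_of_le_of_lt (by linarith : t ≤ (n : ℝ)) hlam.1
            simp only [phi0, if_pos h2]
            rw [inner_self_eq_norm_sq_to_K, hW]; simp only [hg]; norm_num
        _ = ((∫ lam in Ioc (n : ℝ) (n + 1), g (lam - t) : ℝ) : ℂ) := integral_ofReal
        _ = (c : ℂ) := by rw [e2, key _ (by linarith)]
    rw [hrc]
    exact Tendsto.congr' hgc.symm tendsto_const_nhds
end

section
/- Every f ∈ L²((0,1]; H) extends to a stable section f̃ by f̃(λ) = Uⁿ f(λ−n) for n < λ ≤ n+1 (n = 0,1,2,…), and the map f ↦ f̃ + N is a linear isometry from L²((0,1]; H) into the quotient inner product space S/N; in particular, if H ≠ 0 then S/N ≠ 0. -/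
open MeasureTheory Set Filter

/-- The periodic extension `f̃` of `f ∈ L²((0,1]; H)`: `f̃(λ) = Uⁿ f(λ−n)` for
`n < λ ≤ n+1`, `n = 0, 1, 2, …` (and `0` for `λ ≤ 0`). -/
noncomputable def ext {H : Type*} [NormedAddCommGroup H] [InnerProductSpace ℂ H]
    (U : H →ₗᵢ[ℂ] H) (f : ℝ → H) : ℝ → H :=
  fun lam => if 0 < lam then
    (⇑U)^[(⌈lam⌉ - 1).toNat] (f (lam - ((⌈lam⌉ : ℝ) - 1))) else 0

section helpers
variable {H : Type*} [NormedAddCommGroup H] [InnerProductSpace ℂ H]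

lemma iterU_norm (U : H →ₗᵢ[ℂ] H) (n : ℕ) (x : H) : ‖(⇑U)^[n] x‖ = ‖x‖ := by
  induction n with
  | zero => simp
  | succ n ih => rw [Function.iterate_succ_apply', U.norm_map, ih]

lemma iterU_inner (U : H →ₗᵢ[ℂ] H) (n : ℕ) (x y : H) :
    (inner ℂ ((⇑U)^[n] x) ((⇑U)^[n] y) : ℂ) = inner ℂ x y := by
  induction n with
  | zero => simp
  | succ n ih => rw [Function.iterate_succ_apply', Function.iterate_succ_apply',
      U.inner_map_map, ih]

lemma iterU_add (U : H →ₗᵢ[ℂ] H) (n : ℕ) (x y : H) :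
    (⇑U)^[n] (x + y) = (⇑U)^[n] x + (⇑U)^[n] y := by
  induction n with
  | zero => simp
  | succ n ih => simp [Function.iterate_succ_apply', ih]

lemma iterU_smul (U : H →ₗᵢ[ℂ] H) (n : ℕ) (a : ℂ) (x : H) :
    (⇑U)^[n] (a • x) = a • (⇑U)^[n] x := by
  induction n with
  | zero => simp
  | succ n ih => simp [Function.iterate_succ_apply', ih]

lemma iterU_eq_zero (U : H →ₗᵢ[ℂ] H) (n : ℕ) {x : H} (h : (⇑U)^[n] x = 0) : x = 0 := by
  have := iterU_norm U n x
  rw [h, norm_zero] at this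
  exact norm_eq_zero.mp this.symm

lemma iterU_measurable [MeasurableSpace H] [BorelSpace H] (U : H →ₗᵢ[ℂ] H) (n : ℕ) :
    Measurable ((⇑U)^[n]) := by
  induction n with
  | zero => simpa using measurable_id
  | succ n ih => rw [Function.iterate_succ']; exact (U.continuous.measurable).comp ih

lemma ceil_cast_eq {lam : ℝ} (h : 0 < lam) :
    ((⌈lam⌉ : ℝ) - 1) = (((⌈lam⌉ - 1).toNat : ℕ) : ℝ) := by
  have h1 : (1 : ℤ) ≤ ⌈lam⌉ := Int.ceil_pos.mpr h
  have h2 : ((⌈lam⌉ - 1).toNat : ℤ) = ⌈lam⌉ - 1 := Int.toNat_of_nonneg (by omega)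
  have h3 : (((⌈lam⌉ - 1).toNat : ℤ) : ℝ) = ((⌈lam⌉ : ℝ) - 1) := by push_cast [h2]; ring
  exact_mod_cast h3.symm

lemma mem_Ioc_self {lam : ℝ} (h : 0 < lam) :
    lam ∈ Ioc (((⌈lam⌉ - 1).toNat : ℕ) : ℝ) ((((⌈lam⌉ - 1).toNat : ℕ) : ℝ) + 1) := by
  have h1 := ceil_cast_eq h
  constructor
  · rw [← h1]; linarith [Int.ceil_lt_add_one lam]
  · rw [← h1]; linarith [Int.le_ceil lam]

lemma ext_apply (U : H →ₗᵢ[ℂ] H) (f : ℝ → H) (n : ℕ) {lam : ℝ}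
    (h : lam ∈ Ioc (n : ℝ) ((n : ℝ) + 1)) :
    ext U f lam = (⇑U)^[n] (f (lam - n)) := by
  have h0 : 0 < lam := lt_of_le_of_lt (Nat.cast_nonneg n) h.1
  have hc : ⌈lam⌉ = (n : ℤ) + 1 := by
    rw [Int.ceil_eq_iff]
    constructor
    · push_cast; linarith [h.1]
    · push_cast; linarith [h.2]
  simp only [_root_.ext, if_pos h0, hc]
  norm_num

lemma integrableOn_shift {E : Type*} [NormedAddCommGroup E] {g : ℝ → E}
    (hg : IntegrableOn g (Ioc (0:ℝ) 1)) (n : ℕ) :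
    IntegrableOn (fun lam => g (lam - n)) (Ioc (n : ℝ) ((n : ℝ) + 1)) := by
  have h1 : IntervalIntegrable g volume 0 1 :=
    (intervalIntegrable_iff_integrableOn_Ioc_of_le zero_le_one).mpr hg
  have h2 := h1.comp_sub_right (n : ℝ)
  rw [zero_add] at h2
  have h3 : (1 : ℝ) + n = (n : ℝ) + 1 := by ring
  rw [h3] at h2
  exact (intervalIntegrable_iff_integrableOn_Ioc_of_le
    (by linarith [Nat.cast_nonneg (α := ℝ) n])).mp h2

end helpers

/-- Every `f ∈ L²((0,1]; H)` extends to a stable section `f̃`, and the map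
`f ↦ f̃ + N` is a linear isometry from `L²((0,1]; H)` into the quotient inner product
space `S/N`; in particular if `H ≠ 0` then `S/N ≠ 0`. -/
theorem stmt14 {H : Type*} [NormedAddCommGroup H] [InnerProductSpace ℂ H]
    [MeasurableSpace H] [BorelSpace H] (U : H →ₗᵢ[ℂ] H) :
    (∀ f : ℝ → H, Measurable f → IntegrableOn (fun lam => ‖f lam‖ ^ 2) (Ioc 0 1) →
      Stable U (ext U f)) ∧
    (∀ f g : ℝ → H, ext U (f + g) = ext U f + ext U g) ∧
    (∀ (a : ℂ) (f : ℝ → H), ext U (a • f) = a • ext U f) ∧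
    (∀ f g : ℝ → H, Measurable f → IntegrableOn (fun lam => ‖f lam‖ ^ 2) (Ioc 0 1) →
      Measurable g → IntegrableOn (fun lam => ‖g lam‖ ^ 2) (Ioc 0 1) →
      Tendsto (fun n : ℕ => ∫ lam in Ioc (n : ℝ) (n + 1),
          (inner ℂ (ext U f lam) (ext U g lam) : ℂ)) atTop
        (nhds (∫ lam in Ioc (0 : ℝ) 1, (inner ℂ (f lam) (g lam) : ℂ)))) ∧
    (∀ f : ℝ → H, Measurable f → IntegrableOn (fun lam => ‖f lam‖ ^ 2) (Ioc 0 1) →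
      (EvNull (ext U f) ↔ ∀ᵐ lam : ℝ, lam ∈ Ioc (0 : ℝ) 1 → f lam = 0)) ∧
    ((∃ x : H, x ≠ 0) →
      ∃ f : ℝ → H, Stable U f ∧ ¬ EvNull f) := by
  -- Part 1: stability
  have part1 : ∀ f : ℝ → H, Measurable f →
      IntegrableOn (fun lam => ‖f lam‖ ^ 2) (Ioc 0 1) → Stable U (ext U f) := by
    intro f hf hf2
    refine ⟨?_, ?_, 1, one_pos, ?_⟩
    · -- measurability
      have hslice : ∀ n : ℕ, Measurable fun x : ℝ => (⇑U)^[n] (f (x - (n : ℝ))) := fun n =>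
        (iterU_measurable U n).comp (hf.comp (measurable_id.sub measurable_const))
      have hΦ : Measurable fun p : ℝ × ℕ => (⇑U)^[p.2] (f (p.1 - p.2)) :=
        measurable_from_prod_countable_left fun n => hslice n
      have hn : Measurable fun lam : ℝ => (⌈lam⌉ - 1).toNat := by
        exact Measurable.comp (measurable_of_countable (fun z : ℤ => (z - 1).toNat))
          Int.measurable_ceil
      have hcore : Measurable fun lam : ℝ =>
          (⇑U)^[(⌈lam⌉ - 1).toNat] (f (lam - (((⌈lam⌉ - 1).toNat : ℕ) : ℝ))) :=
        hΦ.comp (measurable_id.prodMk hn)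
      have hext : ext U f = (Ioi (0:ℝ)).piecewise
          (fun lam => (⇑U)^[(⌈lam⌉ - 1).toNat] (f (lam - (((⌈lam⌉ - 1).toNat : ℕ) : ℝ)))) 0 := by
        funext lam
        by_cases h : 0 < lam
        · simp only [_root_.ext, if_pos h, Set.piecewise, mem_Ioi, h, if_true, ← ceil_cast_eq h]
        · simp only [_root_.ext, if_neg h, Set.piecewise, mem_Ioi, h, if_false, Pi.zero_apply]
      rw [hext]
      exact Measurable.piecewise measurableSet_Ioi hcore measurable_const
    · -- local integrability
      have hpiece : ∀ n : ℕ, IntegrableOn (fun lam => ‖ext U f lam‖ ^ 2)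
          (Ioc (n : ℝ) ((n : ℝ) + 1)) := by
        intro n
        have h1 : IntegrableOn (fun lam => ‖f (lam - n)‖ ^ 2) (Ioc (n : ℝ) ((n : ℝ) + 1)) :=
          integrableOn_shift hf2 n
        apply h1.congr_fun ?_ measurableSet_Ioc
        intro lam hlam
        show ‖f (lam - (n : ℝ))‖ ^ 2 = ‖_root_.ext U f lam‖ ^ 2
        rw [ext_apply U f n hlam, iterU_norm]
      have hind : ∀ n : ℕ, IntegrableOn (fun lam => ‖ext U f lam‖ ^ 2) (Ioc (0:ℝ) (n : ℝ)) := by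
        intro n
        induction n with
        | zero => simp
        | succ n ih =>
          have hu : Ioc (0:ℝ) (n : ℝ) ∪ Ioc (n : ℝ) ((n : ℝ) + 1) = Ioc (0:ℝ) ((n : ℝ) + 1) :=
            Set.Ioc_union_Ioc_eq_Ioc (Nat.cast_nonneg n) (by linarith)
          have := ih.union (hpiece n)
          rw [hu] at this
          simpa [Nat.cast_succ] using this
      intro T hT
      have hTle : T ≤ ((⌈T⌉.toNat : ℕ) : ℝ) := by
        have := Int.le_ceil T
        have h2 : (⌈T⌉ : ℝ) ≤ ((⌈T⌉.toNat : ℕ) : ℝ) := by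
          exact_mod_cast Int.self_le_toNat ⌈T⌉
        linarith
      exact (hind ⌈T⌉.toNat).mono_set (Set.Ioc_subset_Ioc_right hTle)
    · -- eventual equivariance (in fact holds for all lam > 0)
      filter_upwards with lam h1
      have h0 : 0 < lam := lt_of_lt_of_le one_pos h1
      set n := (⌈lam⌉ - 1).toNat with hn
      have hmem : lam ∈ Ioc ((n : ℕ) : ℝ) (((n : ℕ) : ℝ) + 1) := mem_Ioc_self h0
      have hmem' : lam + 1 ∈ Ioc (((n + 1 : ℕ)) : ℝ) ((((n + 1 : ℕ)) : ℝ) + 1) := by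
        push_cast
        exact ⟨by linarith [hmem.1], by linarith [hmem.2]⟩
      rw [ext_apply U f (n + 1) hmem', ext_apply U f n hmem]
      have harg : lam + 1 - ((n + 1 : ℕ) : ℝ) = lam - (n : ℝ) := by push_cast; ring
      rw [harg, Function.iterate_succ_apply']
  -- Part 4 key: the sequence of integrals is constant
  have key : ∀ f g : ℝ → H, ∀ n : ℕ,
      (∫ lam in Ioc (n : ℝ) ((n : ℝ) + 1), (inner ℂ (ext U f lam) (ext U g lam) : ℂ))
        = ∫ lam in Ioc (0 : ℝ) 1, (inner ℂ (f lam) (g lam) : ℂ) := by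
    intro f g n
    have h1 : (∫ lam in Ioc (n : ℝ) ((n : ℝ) + 1), (inner ℂ (ext U f lam) (ext U g lam) : ℂ))
        = ∫ lam in Ioc (n : ℝ) ((n : ℝ) + 1), (inner ℂ (f (lam - n)) (g (lam - n)) : ℂ) := by
      apply setIntegral_congr_fun measurableSet_Ioc
      intro lam hlam
      show (inner ℂ (_root_.ext U f lam) (_root_.ext U g lam) : ℂ)
        = inner ℂ (f (lam - (n : ℝ))) (g (lam - (n : ℝ)))
      rw [ext_apply U f n hlam, ext_apply U g n hlam, iterU_inner]
    rw [h1]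
    have h2 : (∫ lam in Ioc (n : ℝ) ((n : ℝ) + 1), (inner ℂ (f (lam - n)) (g (lam - n)) : ℂ))
        = ∫ lam in (n : ℝ)..((n : ℝ) + 1), (inner ℂ (f (lam - n)) (g (lam - n)) : ℂ) :=
      (intervalIntegral.integral_of_le (by linarith [Nat.cast_nonneg (α := ℝ) n])).symm
    rw [h2, intervalIntegral.integral_comp_sub_right (fun x => (inner ℂ (f x) (g x) : ℂ)) (n : ℝ)]
    rw [sub_self, add_sub_cancel_left, intervalIntegral.integral_of_le zero_le_one]
  -- Part 5
  have part5 : ∀ f : ℝ → H, Measurable f →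
      IntegrableOn (fun lam => ‖f lam‖ ^ 2) (Ioc 0 1) →
      (EvNull (ext U f) ↔ ∀ᵐ lam : ℝ, lam ∈ Ioc (0 : ℝ) 1 → f lam = 0) := by
    intro f _ _
    constructor
    · rintro ⟨l0, hl0, hae⟩
      set n := ⌈l0⌉.toNat with hn
      have hl0n : l0 ≤ (n : ℝ) := by
        have := Int.le_ceil l0
        have h2 : (⌈l0⌉ : ℝ) ≤ ((⌈l0⌉.toNat : ℕ) : ℝ) := by
          exact_mod_cast Int.self_le_toNat ⌈l0⌉
        linarith
      rw [ae_iff] at hae ⊢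
      have hsub : {lam : ℝ | ¬(lam ∈ Ioc (0:ℝ) 1 → f lam = 0)} ⊆
          (fun x : ℝ => x + (n : ℝ)) ⁻¹' {lam : ℝ | ¬(l0 ≤ lam → ext U f lam = 0)} := by
        intro x hx
        simp only [mem_setOf_eq, Classical.not_imp, mem_preimage] at hx ⊢
        obtain ⟨hx1, hx2⟩ := hx
        constructor
        · linarith [hx1.1]
        · have hmem : x + (n : ℝ) ∈ Ioc ((n : ℕ) : ℝ) (((n : ℕ) : ℝ) + 1) :=
            ⟨by linarith [hx1.1], by linarith [hx1.2]⟩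
          rw [ext_apply U f n hmem]
          have harg : x + (n : ℝ) - (n : ℝ) = x := by ring
          rw [harg]
          intro hcon
          exact hx2 (iterU_eq_zero U n hcon)
      refine measure_mono_null hsub ?_
      rw [measure_preimage_add_right]
      exact hae
    · intro h
      rw [ae_iff] at h
      refine ⟨1, one_pos, ?_⟩
      rw [ae_iff]
      have hsub : {lam : ℝ | ¬((1:ℝ) ≤ lam → ext U f lam = 0)} ⊆
          ⋃ n : ℕ, (fun x : ℝ => x + -(n : ℝ)) ⁻¹'
            {lam : ℝ | ¬(lam ∈ Ioc (0:ℝ) 1 → f lam = 0)} := by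
        intro lam hlam
        simp only [mem_setOf_eq, Classical.not_imp] at hlam
        obtain ⟨h1, h2⟩ := hlam
        have h0 : 0 < lam := lt_of_lt_of_le one_pos h1
        set n := (⌈lam⌉ - 1).toNat with hn
        have hmem : lam ∈ Ioc ((n : ℕ) : ℝ) (((n : ℕ) : ℝ) + 1) := mem_Ioc_self h0
        refine mem_iUnion.mpr ⟨n, ?_⟩
        simp only [mem_preimage, mem_setOf_eq, Classical.not_imp]
        refine ⟨⟨by linarith [hmem.1], by linarith [hmem.2]⟩, ?_⟩
        intro hcon
        apply h2
        rw [ext_apply U f n hmem]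
        have harg : lam + -(n : ℝ) = lam - (n : ℝ) := by ring
        rw [← harg, hcon]
        exact Function.iterate_fixed (by simp) n
      refine measure_mono_null hsub ?_
      refine measure_iUnion_null fun n => ?_
      rw [measure_preimage_add_right]
      exact h
  refine ⟨part1, ?_, ?_, ?_, part5, ?_⟩
  · -- additivity
    intro f g
    funext lam
    by_cases h : 0 < lam
    · simp only [_root_.ext, if_pos h, Pi.add_apply, iterU_add]
    · simp only [_root_.ext, if_neg h, Pi.add_apply, add_zero]
  · -- homogeneity
    intro a f
    funext lam
    by_cases h : 0 < lam
    · simp only [_root_.ext, if_pos h, Pi.smul_apply, iterU_smul]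
    · simp only [_root_.ext, if_neg h, Pi.smul_apply, smul_zero]
  · -- convergence of inner products
    intro f g _ _ _ _
    have hconst : (fun n : ℕ => ∫ lam in Ioc (n : ℝ) ((n : ℝ) + 1),
        (inner ℂ (ext U f lam) (ext U g lam) : ℂ)) =
        fun _ : ℕ => ∫ lam in Ioc (0 : ℝ) 1, (inner ℂ (f lam) (g lam) : ℂ) := by
      funext n; exact key f g n
    rw [hconst]
    exact tendsto_const_nhds
  · -- nontriviality
    rintro ⟨x, hx⟩
    have hint : IntegrableOn (fun lam : ℝ => ‖(fun _ : ℝ => x) lam‖ ^ 2) (Ioc (0:ℝ) 1) := by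
      simp only
      exact integrableOn_const (by simp)
    refine ⟨ext U (fun _ => x), part1 _ measurable_const hint, ?_⟩
    intro hev
    have h := (part5 (fun _ => x) measurable_const hint).mp hev
    rw [ae_iff] at h
    have heq : {lam : ℝ | ¬(lam ∈ Ioc (0:ℝ) 1 → x = 0)} = Ioc (0:ℝ) 1 := by
      ext lam; simp [hx]
    rw [heq] at h
    simp [Real.volume_Ioc] at h
end
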